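/- Let h > 0, let v ∈ ℝ³ be nonzero with Δ̄(v) ≥ 0, and let w₁, w₂ ∈ ℝ³ be such that {v, w₁} and {v, w₂} are each linearly independent. If the numerical walls W_{w₁}(v) and W_{w₂}(v) have a common point, then W_{w₁}(v) = W_{w₂}(v). In other words, two different numerical walls for v cannot intersect. -/
import Mathlib

namespace BridgelandNotes

/-- The central charge `Z_{α,β}(v)` for `v = (r, c, d)`, where `h` plays the role of
`H²`:  `Z_{α,β}(v) = (−d + β·c + ((α² − β²)/2)·h·r) + i·α·(c − β·h·r)`. -/
noncomputable def centralCharge (h : ℝ) (v : ℝ × ℝ × ℝ) (α β : ℝ) : ℂ :=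
  ⟨-v.2.2 + β * v.2.1 + ((α ^ 2 - β ^ 2) / 2) * h * v.1,
    α * (v.2.1 - β * h * v.1)⟩

/-- The numerical wall `W_w(v)` in the `(α, β)`-plane:
`{(α, β) : α > 0 and Re Z_{α,β}(v)·Im Z_{α,β}(w) = Re Z_{α,β}(w)·Im Z_{α,β}(v)}`. -/
noncomputable def numericalWall (h : ℝ) (v w : ℝ × ℝ × ℝ) : Set (ℝ × ℝ) :=
  {p : ℝ × ℝ | 0 < p.1 ∧
    (centralCharge h v p.1 p.2).re * (centralCharge h w p.1 p.2).im =
      (centralCharge h w p.1 p.2).re * (centralCharge h v p.1 p.2).im}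

/-- The discriminant `Δ̄(v) = c² − 2·h·r·d` for `v = (r, c, d)`. -/
def disc (h : ℝ) (v : ℝ × ℝ × ℝ) : ℝ := v.2.1 ^ 2 - 2 * h * v.1 * v.2.2

lemma mem_wall_iff (h : ℝ) (v w : ℝ × ℝ × ℝ) (α β : ℝ) (hα : 0 < α) :
    (α, β) ∈ numericalWall h v w ↔
      h * (v.1 * w.2.1 - w.1 * v.2.1) * ((α ^ 2 + β ^ 2) / 2)
        + h * (w.1 * v.2.2 - v.1 * w.2.2) * β
        + (v.2.1 * w.2.2 - w.2.1 * v.2.2) = 0 := by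
  have key : (centralCharge h v α β).re * (centralCharge h w α β).im
      - (centralCharge h w α β).re * (centralCharge h v α β).im
      = α * (h * (v.1 * w.2.1 - w.1 * v.2.1) * ((α ^ 2 + β ^ 2) / 2)
        + h * (w.1 * v.2.2 - v.1 * w.2.2) * β
        + (v.2.1 * w.2.2 - w.2.1 * v.2.2)) := by
    simp only [centralCharge]; ring
  constructor
  · rintro ⟨-, hE⟩
    have h0 : α * (h * (v.1 * w.2.1 - w.1 * v.2.1) * ((α ^ 2 + β ^ 2) / 2)
        + h * (w.1 * v.2.2 - v.1 * w.2.2) * β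
        + (v.2.1 * w.2.2 - w.2.1 * v.2.2)) = 0 := by
      rw [← key]; linarith
    rcases mul_eq_zero.mp h0 with h' | h'
    · exact absurd h' hα.ne'
    · exact h'
  · intro hE
    refine ⟨hα, ?_⟩
    have : (centralCharge h v α β).re * (centralCharge h w α β).im
        - (centralCharge h w α β).re * (centralCharge h v α β).im = 0 := by
      rw [key, hE, mul_zero]
    linarith

lemma not_li_of_cross_zero (v w : ℝ × ℝ × ℝ) (hv : v ≠ 0)
    (e1 : v.2.1 * w.2.2 - w.2.1 * v.2.2 = 0)
    (e2 : w.1 * v.2.2 - v.1 * w.2.2 = 0)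
    (e3 : v.1 * w.2.1 - w.1 * v.2.1 = 0) :
    ¬ LinearIndependent ℝ ![v, w] := by
  intro hli
  obtain ⟨rv, cv, dv⟩ := v
  obtain ⟨r1, c1, d1⟩ := w
  simp only at e1 e2 e3
  have hvv : rv ^ 2 + cv ^ 2 + dv ^ 2 ≠ 0 := by
    intro e
    apply hv
    have h1 : rv = 0 := by nlinarith [sq_nonneg rv, sq_nonneg cv, sq_nonneg dv]
    have h2 : cv = 0 := by nlinarith [sq_nonneg rv, sq_nonneg cv, sq_nonneg dv]
    have h3 : dv = 0 := by nlinarith [sq_nonneg rv, sq_nonneg cv, sq_nonneg dv]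
    simp [h1, h2, h3, Prod.ext_iff]
  have := (LinearIndependent.pair_iff.mp hli
      (-(rv * r1 + cv * c1 + dv * d1)) (rv ^ 2 + cv ^ 2 + dv ^ 2)) ?_
  · exact hvv this.2
  · have c1' : -(rv * r1 + cv * c1 + dv * d1) * rv + (rv ^ 2 + cv ^ 2 + dv ^ 2) * r1 = 0 := by
      linear_combination dv * e2 - cv * e3
    have c2' : -(rv * r1 + cv * c1 + dv * d1) * cv + (rv ^ 2 + cv ^ 2 + dv ^ 2) * c1 = 0 := by
      linear_combination rv * e3 - dv * e1
    have c3' : -(rv * r1 + cv * c1 + dv * d1) * dv + (rv ^ 2 + cv ^ 2 + dv ^ 2) * d1 = 0 := by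
      linear_combination cv * e1 - rv * e2
    simp only [Prod.smul_def, smul_eq_mul, Prod.mk_add_mk, Prod.ext_iff, Prod.fst_zero,
      Prod.snd_zero, Prod.mk.injEq]
    exact ⟨by linarith, by linarith, by linarith⟩

set_option maxHeartbeats 2000000 in
/-- Two different numerical walls for a fixed class `v` with `Δ̄(v) ≥ 0` cannot
intersect: if two numerical walls for `v` have a common point, they coincide. -/
theorem numericalWall_disjoint_or_eq (h : ℝ) (hh : 0 < h)
    (v : ℝ × ℝ × ℝ) (hv : v ≠ 0) (hdisc : 0 ≤ disc h v)
    (w₁ w₂ : ℝ × ℝ × ℝ)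
    (h₁ : LinearIndependent ℝ ![v, w₁]) (h₂ : LinearIndependent ℝ ![v, w₂])
    (hmeet : (numericalWall h v w₁ ∩ numericalWall h v w₂).Nonempty) :
    numericalWall h v w₁ = numericalWall h v w₂ := by
  obtain ⟨⟨α, β⟩, hp1, hp2⟩ := hmeet
  have hα : 0 < α := hp1.1
  have E1 := (mem_wall_iff h v w₁ α β hα).mp hp1
  have E2 := (mem_wall_iff h v w₂ α β hα).mp hp2
  obtain ⟨rv, cv, dv⟩ := v
  obtain ⟨r1, c1, d1⟩ := w₁
  obtain ⟨r2, c2, d2⟩ := w₂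
  simp only at E1 E2 hdisc
  unfold disc at hdisc
  simp only at hdisc
  -- abbreviations (as plain reals)
  obtain ⟨A1, hA1⟩ : ∃ x, x = h * (rv * c1 - r1 * cv) := ⟨_, rfl⟩
  obtain ⟨B1, hB1⟩ : ∃ x, x = h * (r1 * dv - rv * d1) := ⟨_, rfl⟩
  obtain ⟨C1, hC1⟩ : ∃ x, x = cv * d1 - c1 * dv := ⟨_, rfl⟩
  obtain ⟨A2, hA2⟩ : ∃ x, x = h * (rv * c2 - r2 * cv) := ⟨_, rfl⟩
  obtain ⟨B2, hB2⟩ : ∃ x, x = h * (r2 * dv - rv * d2) := ⟨_, rfl⟩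
  obtain ⟨C2, hC2⟩ : ∃ x, x = cv * d2 - c2 * dv := ⟨_, rfl⟩
  obtain ⟨s, hs⟩ : ∃ x, x = (α ^ 2 + β ^ 2) / 2 := ⟨_, rfl⟩
  obtain ⟨n1, hn1⟩ : ∃ x, x = cv - h * rv * β := ⟨_, rfl⟩
  obtain ⟨n2, hn2⟩ : ∃ x, x = h * rv * s - dv := ⟨_, rfl⟩
  obtain ⟨n3, hn3⟩ : ∃ x, x = dv * β - cv * s := ⟨_, rfl⟩
  have e1 : A1 * s + B1 * β + C1 = 0 := by
    rw [hA1, hB1, hC1, hs]; linear_combination E1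
  have e2 : A2 * s + B2 * β + C2 = 0 := by
    rw [hA2, hB2, hC2, hs]; linear_combination E2
  have o1 : A1 * dv + B1 * cv + C1 * (h * rv) = 0 := by
    rw [hA1, hB1, hC1]; ring
  have o2 : A2 * dv + B2 * cv + C2 * (h * rv) = 0 := by
    rw [hA2, hB2, hC2]; ring
  -- n ≠ 0
  have hN : 0 < n1 ^ 2 + n2 ^ 2 + n3 ^ 2 := by
    rcases lt_or_eq_of_le (by positivity : (0:ℝ) ≤ n1 ^ 2 + n2 ^ 2 + n3 ^ 2) with h' | h'
    · exact h'
    exfalso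
    have z1 : n1 = 0 := by nlinarith [sq_nonneg n1, sq_nonneg n2, sq_nonneg n3]
    have z2 : n2 = 0 := by nlinarith [sq_nonneg n1, sq_nonneg n2, sq_nonneg n3]
    rw [hn1, sub_eq_zero] at z1
    rw [hn2, sub_eq_zero] at z2
    rcases eq_or_ne rv 0 with hr | hr
    · apply hv
      have hc : cv = 0 := by rw [z1, hr]; ring
      have hd : dv = 0 := by rw [← z2, hr]; ring
      simp [hr, hc, hd, Prod.ext_iff]
    · have hd2 : cv ^ 2 - 2 * h * rv * dv = -(h ^ 2 * rv ^ 2 * α ^ 2) := by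
        rw [z1, ← z2, hs]; ring
      rw [hd2] at hdisc
      have : 0 < h ^ 2 * rv ^ 2 * α ^ 2 := by positivity
      linarith
  -- cross products with n vanish
  have cz1a : B1 * n3 - C1 * n2 = 0 := by
    rw [hn2, hn3]; linear_combination dv * e1 - s * o1
  have cz1b : C1 * n1 - A1 * n3 = 0 := by
    rw [hn1, hn3]; linear_combination cv * e1 - β * o1
  have cz1c : A1 * n2 - B1 * n1 = 0 := by
    rw [hn1, hn2]; linear_combination (h * rv) * e1 - o1
  have cz2a : B2 * n3 - C2 * n2 = 0 := by
    rw [hn2, hn3]; linear_combination dv * e2 - s * o2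
  have cz2b : C2 * n1 - A2 * n3 = 0 := by
    rw [hn1, hn3]; linear_combination cv * e2 - β * o2
  have cz2c : A2 * n2 - B2 * n1 = 0 := by
    rw [hn1, hn2]; linear_combination (h * rv) * e2 - o2
  -- proportionality with factor Tᵢ = uᵢ · n (times N)
  obtain ⟨N, hNd⟩ : ∃ x, x = n1 ^ 2 + n2 ^ 2 + n3 ^ 2 := ⟨_, rfl⟩
  obtain ⟨T1, hT1⟩ : ∃ x, x = A1 * n1 + B1 * n2 + C1 * n3 := ⟨_, rfl⟩
  obtain ⟨T2, hT2⟩ : ∃ x, x = A2 * n1 + B2 * n2 + C2 * n3 := ⟨_, rfl⟩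
  have hNpos : 0 < N := by rw [hNd]; exact hN
  have pA1 : A1 * N = T1 * n1 := by
    rw [hNd, hT1]; linear_combination n2 * cz1c - n3 * cz1b
  have pB1 : B1 * N = T1 * n2 := by
    rw [hNd, hT1]; linear_combination n3 * cz1a - n1 * cz1c
  have pC1 : C1 * N = T1 * n3 := by
    rw [hNd, hT1]; linear_combination n1 * cz1b - n2 * cz1a
  have pA2 : A2 * N = T2 * n1 := by
    rw [hNd, hT2]; linear_combination n2 * cz2c - n3 * cz2b
  have pB2 : B2 * N = T2 * n2 := by
    rw [hNd, hT2]; linear_combination n3 * cz2a - n1 * cz2c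
  have pC2 : C2 * N = T2 * n3 := by
    rw [hNd, hT2]; linear_combination n1 * cz2b - n2 * cz2a
  -- Tᵢ ≠ 0
  have hT1ne : T1 ≠ 0 := by
    intro ht
    rw [ht, zero_mul] at pA1 pB1 pC1
    have zA : A1 = 0 := by
      rcases mul_eq_zero.mp pA1 with h' | h'
      · exact h'
      · exact absurd h' hNpos.ne'
    have zB : B1 = 0 := by
      rcases mul_eq_zero.mp pB1 with h' | h'
      · exact h'
      · exact absurd h' hNpos.ne'
    have zC : C1 = 0 := by
      rcases mul_eq_zero.mp pC1 with h' | h'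
      · exact h'
      · exact absurd h' hNpos.ne'
    rw [hA1] at zA; rw [hB1] at zB; rw [hC1] at zC
    refine not_li_of_cross_zero (rv, cv, dv) (r1, c1, d1) hv ?_ ?_ ?_ h₁
    · simpa using zC
    · have := (mul_eq_zero.mp zB).resolve_left hh.ne'
      simpa [sub_eq_zero] using by linarith [this] 
    · have := (mul_eq_zero.mp zA).resolve_left hh.ne'
      simpa [sub_eq_zero] using by linarith [this]
  have hT2ne : T2 ≠ 0 := by
    intro ht
    rw [ht, zero_mul] at pA2 pB2 pC2
    have zA : A2 = 0 := by
      rcases mul_eq_zero.mp pA2 with h' | h'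
      · exact h'
      · exact absurd h' hNpos.ne'
    have zB : B2 = 0 := by
      rcases mul_eq_zero.mp pB2 with h' | h'
      · exact h'
      · exact absurd h' hNpos.ne'
    have zC : C2 = 0 := by
      rcases mul_eq_zero.mp pC2 with h' | h'
      · exact h'
      · exact absurd h' hNpos.ne'
    rw [hA2] at zA; rw [hB2] at zB; rw [hC2] at zC
    refine not_li_of_cross_zero (rv, cv, dv) (r2, c2, d2) hv ?_ ?_ ?_ h₂
    · simpa using zC
    · have := (mul_eq_zero.mp zB).resolve_left hh.ne'
      simpa [sub_eq_zero] using by linarith [this]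
    · have := (mul_eq_zero.mp zA).resolve_left hh.ne'
      simpa [sub_eq_zero] using by linarith [this]
  -- conclude
  ext ⟨a, b⟩
  rcases le_or_gt a 0 with ha | ha
  · constructor <;> intro hm <;> exact absurd hm.1 (not_lt.mpr ha)
  rw [mem_wall_iff h (rv, cv, dv) (r1, c1, d1) a b ha,
    mem_wall_iff h (rv, cv, dv) (r2, c2, d2) a b ha]
  simp only
  have key1 : (h * (rv * c1 - r1 * cv) * ((a ^ 2 + b ^ 2) / 2)
      + h * (r1 * dv - rv * d1) * b + (cv * d1 - c1 * dv)) * N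
      = T1 * (n1 * ((a ^ 2 + b ^ 2) / 2) + n2 * b + n3) := by
    rw [← hA1, ← hB1, ← hC1]
    linear_combination ((a ^ 2 + b ^ 2) / 2) * pA1 + b * pB1 + pC1
  have key2 : (h * (rv * c2 - r2 * cv) * ((a ^ 2 + b ^ 2) / 2)
      + h * (r2 * dv - rv * d2) * b + (cv * d2 - c2 * dv)) * N
      = T2 * (n1 * ((a ^ 2 + b ^ 2) / 2) + n2 * b + n3) := by
    rw [← hA2, ← hB2, ← hC2]
    linear_combination ((a ^ 2 + b ^ 2) / 2) * pA2 + b * pB2 + pC2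
  constructor
  · intro hz
    have : T1 * (n1 * ((a ^ 2 + b ^ 2) / 2) + n2 * b + n3) = 0 := by
      rw [← key1, hz, zero_mul]
    have hG : n1 * ((a ^ 2 + b ^ 2) / 2) + n2 * b + n3 = 0 :=
      (mul_eq_zero.mp this).resolve_left hT1ne
    have : (h * (rv * c2 - r2 * cv) * ((a ^ 2 + b ^ 2) / 2)
        + h * (r2 * dv - rv * d2) * b + (cv * d2 - c2 * dv)) * N = 0 := by
      rw [key2, hG, mul_zero]
    exact (mul_eq_zero.mp this).resolve_right hNpos.ne'
  · intro hz
    have : T2 * (n1 * ((a ^ 2 + b ^ 2) / 2) + n2 * b + n3) = 0 := by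
      rw [← key2, hz, zero_mul]
    have hG : n1 * ((a ^ 2 + b ^ 2) / 2) + n2 * b + n3 = 0 :=
      (mul_eq_zero.mp this).resolve_left hT2ne
    have : (h * (rv * c1 - r1 * cv) * ((a ^ 2 + b ^ 2) / 2)
        + h * (r1 * dv - rv * d1) * b + (cv * d1 - c1 * dv)) * N = 0 := by
      rw [key1, hG, mul_zero]
    exact (mul_eq_zero.mp this).resolve_right hNpos.ne'

end BridgelandNotes
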